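/- Let n ≥ 2, μ ≠ 0, λ ∈ ℝ, and set ν = n!(μ−λ)/μ^{n+1}. Then the function ψ(y) = ν e^{μy}/y^{n−1} + (λ/μ) y + ((λ−μ)/μ^{n+1}) Σ_{j=0}^{n−1} (n!/j!) μ^j y^{j+1−n}, extended to y = 0, has the power series expansion ψ(y) = y + Σ_{k=1}^{∞} (ν μ^{n+k}/(n+k)!) y^{k+1} near y = 0; in particular ψ(0) = 0 and ψ'(0) = 1. -/

import Mathlib

open scoped BigOperators Nat

set_option maxHeartbeats 1000000

/-- for `n ≥ 2`, `μ ≠ 0` and `ν = n!(μ−λ)/μ^{n+1}`, the soliton profile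
`ψ(y) = ν e^{μy}/y^{n−1} + (λ/μ)y + ((λ−μ)/μ^{n+1}) ∑_{j=0}^{n−1}(n!/j!)μ^j y^{j+1−n}`
coincides, for `y ≠ 0`, with the entire power series
`Ψ(y) = y + ∑_{k≥1} (νμ^{n+k}/(n+k)!) y^{k+1}`; in particular the extension `Ψ`
satisfies `Ψ(0) = 0` and `Ψ'(0) = 1`. -/
theorem soliton_profile_power_series
    (n : ℕ) (hn : 2 ≤ n) (μ lam ν : ℝ) (hμ : μ ≠ 0)
    (hν : ν = (n ! : ℝ) * (μ - lam) / μ ^ (n + 1))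
    (Ψ : ℝ → ℝ)
    (hΨ : Ψ = fun y =>
      y + ∑' k : ℕ, (ν * μ ^ (n + k + 1) / ((n + k + 1)! : ℝ)) * y ^ (k + 2)) :
    (∀ y : ℝ, y ≠ 0 →
        ν * Real.exp (μ * y) / y ^ (n - 1) + (lam / μ) * y
          + ((lam - μ) / μ ^ (n + 1))
              * ∑ j ∈ Finset.range n, ((n ! : ℝ) / (j ! : ℝ)) * μ ^ j * y ^ ((j : ℤ) + 1 - n)
        = Ψ y)
      ∧ Ψ 0 = 0 ∧ HasDerivAt Ψ 1 0 := by
  have hne : (n ! : ℝ) ≠ 0 := Nat.cast_ne_zero.mpr n.factorial_ne_zero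
  have h0 : Ψ 0 = 0 := by
    rw [hΨ]
    simp
  refine ⟨?_, h0, ?_⟩
  · intro y hy
    have hyp : y ^ (n - 1) ≠ 0 := pow_ne_zero _ hy
    have hsum : Summable fun m : ℕ => (μ * y) ^ m / (m ! : ℝ) :=
      Real.summable_pow_div_factorial (μ * y)
    have hsplit : Real.exp (μ * y)
        = ∑ j ∈ Finset.range n, (μ * y) ^ j / (j ! : ℝ)
          + ∑' k : ℕ, (μ * y) ^ (k + n) / ((k + n)! : ℝ) := by
      have hexp : Real.exp (μ * y) = ∑' m : ℕ, (μ * y) ^ m / (m ! : ℝ) := by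
        rw [Real.exp_eq_exp_ℝ, NormedSpace.exp_eq_tsum_div]
      rw [hexp, ← hsum.sum_add_tsum_nat_add n]
    have hyn : y ^ n = y ^ (n - 1) * y := by
      rw [← pow_succ]
      congr 1
      omega
    have h1 : ν * (∑ j ∈ Finset.range n, (μ * y) ^ j / (j ! : ℝ)) / y ^ (n - 1)
        + ((lam - μ) / μ ^ (n + 1))
            * ∑ j ∈ Finset.range n, ((n ! : ℝ) / (j ! : ℝ)) * μ ^ j * y ^ ((j : ℤ) + 1 - n)
        = 0 := by
      rw [Finset.mul_sum, Finset.sum_div, Finset.mul_sum, ← Finset.sum_add_distrib]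
      apply Finset.sum_eq_zero
      intro j hj
      have hje : (j ! : ℝ) ≠ 0 := Nat.cast_ne_zero.mpr j.factorial_ne_zero
      have hz : y ^ ((j : ℤ) + 1 - n) = y ^ (j + 1) / y ^ n := by
        rw [show (j : ℤ) + 1 - n = ((j + 1 : ℕ) : ℤ) - (n : ℤ) by push_cast; ring,
          zpow_sub₀ hy, zpow_natCast, zpow_natCast]
      rw [hz, hyn, pow_succ, hν]
      field_simp
      ring
    have hT : Summable fun k : ℕ => (μ * y) ^ (k + n) / ((k + n)! : ℝ) :=
      (summable_nat_add_iff n).mpr hsum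
    have h2 : ν * (∑' k : ℕ, (μ * y) ^ (k + n) / ((k + n)! : ℝ)) / y ^ (n - 1)
        = (1 - lam / μ) * y
          + ∑' k : ℕ, (ν * μ ^ (n + k + 1) / ((n + k + 1)! : ℝ)) * y ^ (k + 2) := by
      calc ν * (∑' k : ℕ, (μ * y) ^ (k + n) / ((k + n)! : ℝ)) / y ^ (n - 1)
          = ∑' k : ℕ, ν * ((μ * y) ^ (k + n) / ((k + n)! : ℝ)) / y ^ (n - 1) := by
            rw [← tsum_mul_left, ← tsum_div_const]
        _ = ν * ((μ * y) ^ (0 + n) / ((0 + n)! : ℝ)) / y ^ (n - 1)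
            + ∑' k : ℕ, ν * ((μ * y) ^ (k + 1 + n) / ((k + 1 + n)! : ℝ)) / y ^ (n - 1) :=
            ((hT.mul_left ν).div_const _).tsum_eq_zero_add
        _ = (1 - lam / μ) * y
            + ∑' k : ℕ, (ν * μ ^ (n + k + 1) / ((n + k + 1)! : ℝ)) * y ^ (k + 2) := by
            congr 1
            · rw [zero_add, hν, mul_pow, hyn]
              field_simp
              ring
            · refine tsum_congr fun k => ?_
              rw [show k + 1 + n = n + k + 1 by omega]
              have hye : y ^ (n + k + 1) = y ^ (k + 2) * y ^ (n - 1) := by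
                rw [← pow_add]
                congr 1
                omega
              rw [mul_pow, hye]
              field_simp
    rw [hΨ, hsplit]
    linear_combination h1 + h2
  · rw [hΨ, hasDerivAt_iff_isLittleO]
    have hC : Summable fun k : ℕ => |ν| * |μ| ^ (n + k + 1) / ((n + k + 1)! : ℝ) := by
      have h := (summable_nat_add_iff (n + 1)).mpr
        ((Real.summable_pow_div_factorial |μ|).mul_left |ν|)
      refine h.congr fun k => ?_
      rw [show k + (n + 1) = n + k + 1 by omega, mul_div_assoc]
    have key : (fun y : ℝ =>
        ∑' k : ℕ, (ν * μ ^ (n + k + 1) / ((n + k + 1)! : ℝ)) * y ^ (k + 2))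
        =o[nhds 0] fun y : ℝ => y := by
      have hO : (fun y : ℝ =>
          ∑' k : ℕ, (ν * μ ^ (n + k + 1) / ((n + k + 1)! : ℝ)) * y ^ (k + 2))
          =O[nhds 0] fun y : ℝ => y ^ 2 := by
        rw [Asymptotics.isBigO_iff]
        refine ⟨∑' k : ℕ, |ν| * |μ| ^ (n + k + 1) / ((n + k + 1)! : ℝ), ?_⟩
        filter_upwards [Metric.ball_mem_nhds (0 : ℝ) one_pos] with y hy
        have hy1 : |y| ≤ 1 := by
          rw [Metric.mem_ball, Real.dist_eq, sub_zero] at hy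
          exact hy.le
        have habs : ∀ k : ℕ,
            |(ν * μ ^ (n + k + 1) / ((n + k + 1)! : ℝ)) * y ^ (k + 2)|
              ≤ (|ν| * |μ| ^ (n + k + 1) / ((n + k + 1)! : ℝ)) * y ^ 2 := by
          intro k
          have h1 : |y ^ (k + 2)| ≤ y ^ 2 := by
            rw [abs_pow]
            calc |y| ^ (k + 2) ≤ |y| ^ 2 :=
                  pow_le_pow_of_le_one (abs_nonneg y) hy1 (by omega)
              _ = y ^ 2 := sq_abs y
          have h2 : |ν * μ ^ (n + k + 1) / ((n + k + 1)! : ℝ)|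
              = |ν| * |μ| ^ (n + k + 1) / ((n + k + 1)! : ℝ) := by
            rw [abs_div, abs_mul, abs_pow, abs_of_nonneg (by positivity : (0:ℝ) ≤ ((n+k+1)! : ℝ))]
          calc |(ν * μ ^ (n + k + 1) / ((n + k + 1)! : ℝ)) * y ^ (k + 2)|
              = |ν * μ ^ (n + k + 1) / ((n + k + 1)! : ℝ)| * |y ^ (k + 2)| := abs_mul _ _
            _ ≤ |ν * μ ^ (n + k + 1) / ((n + k + 1)! : ℝ)| * y ^ 2 :=
                mul_le_mul_of_nonneg_left h1 (abs_nonneg _)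
            _ = (|ν| * |μ| ^ (n + k + 1) / ((n + k + 1)! : ℝ)) * y ^ 2 := by rw [h2]
        have hs2 : Summable fun k : ℕ =>
            (|ν| * |μ| ^ (n + k + 1) / ((n + k + 1)! : ℝ)) * y ^ 2 := hC.mul_right _
        have hs1 : Summable fun k : ℕ =>
            |(ν * μ ^ (n + k + 1) / ((n + k + 1)! : ℝ)) * y ^ (k + 2)| :=
          Summable.of_nonneg_of_le (fun k => abs_nonneg _) habs hs2
        have hnorm : ‖∑' k : ℕ, (ν * μ ^ (n + k + 1) / ((n + k + 1)! : ℝ)) * y ^ (k + 2)‖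
            ≤ ∑' k : ℕ, |(ν * μ ^ (n + k + 1) / ((n + k + 1)! : ℝ)) * y ^ (k + 2)| := by
          have := norm_tsum_le_tsum_norm
            (f := fun k : ℕ => (ν * μ ^ (n + k + 1) / ((n + k + 1)! : ℝ)) * y ^ (k + 2))
            (by simpa only [Real.norm_eq_abs] using hs1)
          simpa only [Real.norm_eq_abs] using this
        calc ‖∑' k : ℕ, (ν * μ ^ (n + k + 1) / ((n + k + 1)! : ℝ)) * y ^ (k + 2)‖
            ≤ ∑' k : ℕ, |(ν * μ ^ (n + k + 1) / ((n + k + 1)! : ℝ)) * y ^ (k + 2)| := hnorm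
          _ ≤ ∑' k : ℕ, (|ν| * |μ| ^ (n + k + 1) / ((n + k + 1)! : ℝ)) * y ^ 2 :=
              Summable.tsum_le_tsum habs hs1 hs2
          _ = (∑' k : ℕ, |ν| * |μ| ^ (n + k + 1) / ((n + k + 1)! : ℝ)) * y ^ 2 :=
              tsum_mul_right
          _ ≤ (∑' k : ℕ, |ν| * |μ| ^ (n + k + 1) / ((n + k + 1)! : ℝ)) * ‖y ^ 2‖ := by
              rw [Real.norm_eq_abs, abs_of_nonneg (sq_nonneg y)]
      exact hO.trans_isLittleO (Asymptotics.isLittleO_pow_id (by norm_num))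
    have hzero : (∑' k : ℕ, (ν * μ ^ (n + k + 1) / ((n + k + 1)! : ℝ)) * (0:ℝ) ^ (k + 2)) = 0 := by
      simp
    show (fun x : ℝ =>
        (x + ∑' k : ℕ, (ν * μ ^ (n + k + 1) / ((n + k + 1)! : ℝ)) * x ^ (k + 2))
          - ((0:ℝ) + ∑' k : ℕ, (ν * μ ^ (n + k + 1) / ((n + k + 1)! : ℝ)) * (0:ℝ) ^ (k + 2))
          - (x - 0) • (1:ℝ)) =o[nhds 0] fun x : ℝ => x - 0
    have heq : (fun x : ℝ =>
        (x + ∑' k : ℕ, (ν * μ ^ (n + k + 1) / ((n + k + 1)! : ℝ)) * x ^ (k + 2))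
          - ((0:ℝ) + ∑' k : ℕ, (ν * μ ^ (n + k + 1) / ((n + k + 1)! : ℝ)) * (0:ℝ) ^ (k + 2))
          - (x - 0) • (1:ℝ))
        = fun x : ℝ => ∑' k : ℕ, (ν * μ ^ (n + k + 1) / ((n + k + 1)! : ℝ)) * x ^ (k + 2) := by
      funext x
      rw [hzero, smul_eq_mul]
      ring
    rw [heq]
    simpa using key
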